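/- Let σ_c > 0, σ_z > 0 and let d, n be positive integers. For 0 ≤ ε < σ_c define α(ε) = (σ_c² − ε σ_c σ_z √(d/n) / √(σ_c² + σ_z² (d/n) − ε²)) / (σ_c² + σ_z² (d/n)). Then (α(ε) − 1)² σ_c² + α(ε)² σ_z² (d/n) = σ_c² · σ_z² (d/n) / (σ_c² + σ_z² (d/n) − ε²), and the right-hand side is a strictly monotonically increasing function of ε on [0, σ_c). -/

import Mathlib

/-- The robustness–accuracy trade-off: the standard risk of the optimal ε-robust denoiser equals
`σ_c² σ_z² (d/n) / (σ_c² + σ_z² (d/n) - ε²)`, which is strictly increasing in `ε` on `[0, σ_c)`. -/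
theorem stmt12 (σc σz : ℝ) (d n : ℕ) (hσc : 0 < σc) (hσz : 0 < σz) (hd : 0 < d) (hn : 0 < n) :
    (∀ ε : ℝ, 0 ≤ ε → ε < σc →
      (((σc ^ 2 - ε * σc * σz * Real.sqrt ((d : ℝ) / n)
            / Real.sqrt (σc ^ 2 + σz ^ 2 * ((d : ℝ) / n) - ε ^ 2))
          / (σc ^ 2 + σz ^ 2 * ((d : ℝ) / n)) - 1) ^ 2 * σc ^ 2
        + ((σc ^ 2 - ε * σc * σz * Real.sqrt ((d : ℝ) / n)
            / Real.sqrt (σc ^ 2 + σz ^ 2 * ((d : ℝ) / n) - ε ^ 2))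
          / (σc ^ 2 + σz ^ 2 * ((d : ℝ) / n))) ^ 2 * σz ^ 2 * ((d : ℝ) / n)
        = σc ^ 2 * σz ^ 2 * ((d : ℝ) / n) / (σc ^ 2 + σz ^ 2 * ((d : ℝ) / n) - ε ^ 2))) ∧
    StrictMonoOn
      (fun ε : ℝ => σc ^ 2 * σz ^ 2 * ((d : ℝ) / n) / (σc ^ 2 + σz ^ 2 * ((d : ℝ) / n) - ε ^ 2))
      (Set.Ico 0 σc) := by
  have hq : 0 < (d : ℝ) / n := by positivity
  have hk : 0 < σz ^ 2 * ((d : ℝ) / n) := by positivity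
  have hT : 0 < σc ^ 2 + σz ^ 2 * ((d : ℝ) / n) := by positivity
  constructor
  · intro ε hε0 hε1
    have hD : 0 < σc ^ 2 + σz ^ 2 * ((d : ℝ) / n) - ε ^ 2 := by nlinarith
    set w := Real.sqrt ((d : ℝ) / n) with hw
    set r := Real.sqrt (σc ^ 2 + σz ^ 2 * ((d : ℝ) / n) - ε ^ 2) with hrdef
    have hw2 : w ^ 2 = (d : ℝ) / n := Real.sq_sqrt hq.le
    have hr2 : r ^ 2 = σc ^ 2 + σz ^ 2 * ((d : ℝ) / n) - ε ^ 2 := Real.sq_sqrt hD.le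
    have hr : 0 < r := Real.sqrt_pos.mpr hD
    rw [← hw2]
    have hr2' : r ^ 2 = σc ^ 2 + σz ^ 2 * w ^ 2 - ε ^ 2 := by rw [hw2]; exact hr2
    have hT' : σc ^ 2 + σz ^ 2 * w ^ 2 ≠ 0 := by rw [hw2]; exact hT.ne'
    rw [← hr2']
    field_simp
    linear_combination (σz ^ 2 * w ^ 2 * (σc ^ 2 + σz ^ 2 * w ^ 2)) * hr2'
  · intro a ha b hb hab
    obtain ⟨ha0, ha1⟩ := ha
    obtain ⟨hb0, hb1⟩ := hb
    have hDa : 0 < σc ^ 2 + σz ^ 2 * ((d : ℝ) / n) - a ^ 2 := by nlinarith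
    have hDb : 0 < σc ^ 2 + σz ^ 2 * ((d : ℝ) / n) - b ^ 2 := by nlinarith
    have h : σc ^ 2 + σz ^ 2 * ((d : ℝ) / n) - b ^ 2 <
        σc ^ 2 + σz ^ 2 * ((d : ℝ) / n) - a ^ 2 := by nlinarith
    have hC : 0 < σc ^ 2 * σz ^ 2 * ((d : ℝ) / n) := by positivity
    exact div_lt_div_of_pos_left hC hDb h
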